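/- The function φ_k(z) = ((1+z)/z²)·log(1+z) - 1/z - 1/k has a unique zero on (0,∞). -/

import Mathlib

open Real Set

lemma log_ineq' (x : ℝ) (hx : 0 < x) : x / (1 + x) < Real.log (1 + x) := by
  have h1 : (0:ℝ) < 1 + x := by linarith
  have h := Real.log_lt_sub_one_of_pos (x := (1+x)⁻¹) (by positivity)
    (by
      intro h
      have : (1:ℝ) + x = 1 := by
        field_simp at h; linarith
      linarith)
  rw [Real.log_inv] at h
  have h2 : (1+x)⁻¹ - 1 = -(x/(1+x)) := by field_simp; ring
  rw [h2] at h
  linarith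

lemma key_ineq (z : ℝ) (hz : 0 < z) : 2 * z < (2 + z) * Real.log (1 + z) := by
  have hd : ∀ x : ℝ, 0 ≤ x →
      HasDerivAt (fun y : ℝ => (2 + y) * Real.log (1 + y) - 2 * y)
        (Real.log (1 + x) - x / (1 + x)) x := by
    intro x hx
    have h1 : (0:ℝ) < 1 + x := by linarith
    have hA : HasDerivAt (fun y : ℝ => 1 + y) 1 x := by
      simpa using (hasDerivAt_id x).const_add 1
    have hL : HasDerivAt (fun y : ℝ => Real.log (1 + y)) (1 / (1 + x)) x := by
      have := (Real.hasDerivAt_log h1.ne').comp x hA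
      simpa [one_div, Function.comp_def] using this
    have hB : HasDerivAt (fun y : ℝ => 2 + y) 1 x := by
      simpa using (hasDerivAt_id x).const_add 2
    have h2 : HasDerivAt (fun y : ℝ => 2 * y) 2 x := by
      simpa using (hasDerivAt_id x).const_mul 2
    have := (hB.mul hL).sub h2
    refine this.congr_deriv ?_
    field_simp
    ring
  have hmono : StrictMonoOn (fun y : ℝ => (2 + y) * Real.log (1 + y) - 2 * y) (Set.Ici 0) :=
    strictMonoOn_of_deriv_pos (convex_Ici 0)
      (fun x hx => (hd x hx).continuousAt.continuousWithinAt)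
      (fun x hx => by
        rw [interior_Ici] at hx
        rw [(hd x (le_of_lt hx)).deriv]
        have := log_ineq' x hx
        linarith)
  have h0 : (0:ℝ) ∈ Set.Ici (0:ℝ) := Set.self_mem_Ici
  have hzm : z ∈ Set.Ici (0:ℝ) := Set.mem_Ici.mpr hz.le
  have := hmono h0 hzm hz
  simp at this
  linarith

theorem stmt_11 (k : ℕ) (hk : 3 ≤ k) :
    ∃! z : ℝ, 0 < z ∧
      (1 + z) / z ^ 2 * Real.log (1 + z) - 1 / z - 1 / (k : ℝ) = 0 := by
  have hk3 : (3:ℝ) ≤ (k:ℝ) := by exact_mod_cast hk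
  have hk0 : (0:ℝ) < (k:ℝ) := by linarith
  set F : ℝ → ℝ := fun z => (1 + z) / z ^ 2 * Real.log (1 + z) - 1 / z - 1 / (k:ℝ) with hF
  have hd : ∀ z : ℝ, 0 < z →
      HasDerivAt F ((2 * z - (2 + z) * Real.log (1 + z)) / z ^ 3) z := by
    intro z hz
    have hz0 : z ≠ 0 := hz.ne'
    have h1z : (0:ℝ) < 1 + z := by linarith
    have hA : HasDerivAt (fun y : ℝ => 1 + y) 1 z := by
      simpa using (hasDerivAt_id z).const_add 1
    have hP : HasDerivAt (fun y : ℝ => y ^ 2) (2 * z) z := by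
      simpa using hasDerivAt_pow 2 z
    have hQ : HasDerivAt (fun y : ℝ => (1 + y) / y ^ 2)
        ((1 * z ^ 2 - (1 + z) * (2 * z)) / (z ^ 2) ^ 2) z := hA.div hP (pow_ne_zero 2 hz0)
    have hL : HasDerivAt (fun y : ℝ => Real.log (1 + y)) (1 / (1 + z)) z := by
      have := (Real.hasDerivAt_log h1z.ne').comp z hA
      simpa [one_div, Function.comp_def] using this
    have hI : HasDerivAt (fun y : ℝ => 1 / y) (-(1 / z ^ 2)) z := by
      simpa [one_div] using hasDerivAt_inv hz0
    have total := ((hQ.mul hL).sub hI).sub_const (1 / (k:ℝ))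
    rw [hF]
    refine total.congr_deriv ?_
    field_simp
    ring
  have hanti : StrictAntiOn F (Set.Ioi 0) :=
    strictAntiOn_of_deriv_neg (convex_Ioi 0)
      (fun x hx => (hd x hx).continuousAt.continuousWithinAt)
      (fun x hx => by
        rw [interior_Ioi] at hx
        rw [(hd x hx).deriv]
        exact div_neg_of_neg_of_pos (by linarith [key_ineq x hx]) (pow_pos (Set.mem_Ioi.mp hx) 3))
  set E : ℝ := Real.exp (2 * (k:ℝ)) with hE0
  have hE1 : (1:ℝ) < E := by
    rw [hE0]
    calc (1:ℝ) = Real.exp 0 := Real.exp_zero.symm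
    _ < Real.exp (2 * k) := Real.exp_lt_exp.mpr (by linarith)
  have hE3 : 2 * (k:ℝ)^2 - k + 3 ≤ E := by
    set u : ℝ := Real.exp (2 * (k:ℝ) / 3) with hu0
    have hu : (1:ℝ) + 2 * k / 3 ≤ u := by
      have := Real.add_one_le_exp (2 * (k:ℝ) / 3)
      rw [hu0]; linarith
    have hup : (0:ℝ) < u := Real.exp_pos _
    have hE : E = u * u * u := by
      rw [hE0, hu0, ← Real.exp_add, ← Real.exp_add]
      ring_nf
    have h3 : ((1:ℝ) + 2 * k / 3) ^ 3 ≤ u ^ 3 :=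
      pow_le_pow_left₀ (by positivity) hu 3
    have h4 : 2 * (k:ℝ)^2 - k + 3 ≤ ((1:ℝ) + 2 * k / 3) ^ 3 := by nlinarith [hk3]
    have h5 : u ^ 3 = u * u * u := by ring
    linarith [h3, h4, hE ▸ (h5 ▸ le_refl (u^3))]
  set b : ℝ := E - 1 with hb0
  have hb : (0:ℝ) < b := by rw [hb0]; linarith
  have h1b : (1:ℝ) ≤ b := by rw [hb0]; nlinarith [hE3, hk3]
  have hF1 : 0 < F 1 := by
    have hlog2 := Real.log_two_gt_d9
    have h1 : F 1 = 2 * Real.log 2 - 1 - 1 / (k:ℝ) := by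
      rw [hF]
      norm_num
    have hk' : 1 / (k:ℝ) ≤ 1 / 3 := by
      apply one_div_le_one_div_of_le <;> linarith
    rw [h1]
    linarith
  have hFb : F b < 0 := by
    have h1bE : 1 + b = E := by rw [hb0]; ring
    have hlog : Real.log (1 + b) = 2 * (k:ℝ) := by rw [h1bE, hE0, Real.log_exp]
    have heq : F b = (2 * (k:ℝ)^2 * E - k * b - b^2) / (b^2 * k) := by
      rw [hF]
      simp only
      rw [hlog, h1bE]
      field_simp
    rw [heq]
    apply div_neg_of_neg_of_pos _ (by positivity)
    have hbE : b = E - 1 := hb0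
    nlinarith [hE3, hE1, hk3, mul_le_mul_of_nonneg_right hE3 (by positivity : (0:ℝ) ≤ E)]
  have hcont : ContinuousOn F (Set.Icc 1 b) := fun x hx =>
    (hd x (by linarith [hx.1])).continuousAt.continuousWithinAt
  have hmem : (0:ℝ) ∈ Set.Icc (F b) (F 1) := ⟨hFb.le, hF1.le⟩
  obtain ⟨z, hzmem, hz0⟩ := intermediate_value_Icc' h1b hcont hmem
  refine ⟨z, ⟨by linarith [hzmem.1], hz0⟩, ?_⟩
  rintro y ⟨hy, hy0⟩
  exact hanti.injOn (Set.mem_Ioi.mpr hy) (Set.mem_Ioi.mpr (by linarith [hzmem.1]))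
    (hy0.trans hz0.symm)
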